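/- Let k be a positive integer, b a nonzero complex number, and a = ((-1)^{k+1} + 1)·b. For each positive integer n define f_n(z) = b(z - 1/n)^k / k! + (-1)^{k+1} / (k!(z - 1/n)) + a. Then f_n^{(k)}(z) = b - 1/(z - 1/n)^{k+1}, the functions f_n and f_n^{(k)} share the value a (f_n(z) = a ⟺ f_n^{(k)}(z) = a on their common domain), and f_n^{(k)}(z) ≠ b for all z ≠ 1/n. -/

import Mathlib

open Finset in
private lemma stmt3_prodA (k : ℕ) : ∏ i ∈ range k, ((k:ℂ) - i) = k.factorial := by
  have h2 : ((k.factorial : ℕ) : ℂ) = ∏ i ∈ range k, ((i:ℂ) + 1) := by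
    rw [← Finset.prod_range_add_one_eq_factorial k]
    push_cast; rfl
  rw [h2, ← Finset.prod_range_reflect]
  refine Finset.prod_congr rfl fun j hj => ?_
  have hj' := Finset.mem_range.mp hj
  have h3 : (↑(k - 1 - j) : ℂ) = (k : ℂ) - (1 + j) := by
    have : k - 1 - j = k - (1 + j) := by omega
    rw [this, Nat.cast_sub (by omega)]
    push_cast; ring
  rw [h3]; ring

open Finset in
private lemma stmt3_prodB (k : ℕ) :
    ∏ i ∈ range k, ((-1:ℂ) - i) = (-1)^k * k.factorial := by
  have h : ∏ i ∈ range k, ((-1:ℂ) - i) = ∏ i ∈ range k, (-1 : ℂ) * ((i:ℂ) + 1) :=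
    Finset.prod_congr rfl fun j _ => by ring
  rw [h, Finset.prod_mul_distrib, Finset.prod_const, card_range,
    ← Finset.prod_range_add_one_eq_factorial k]
  push_cast; ring

open Finset in
noncomputable def stmt3_F (k : ℕ) (b a c : ℂ) (j : ℕ) (z : ℂ) : ℂ :=
  (b / k.factorial) * (∏ i ∈ range j, ((k : ℂ) - i)) * (z - c) ^ ((k : ℤ) - j)
  + ((-1:ℂ) ^ (k+1) / k.factorial) * (∏ i ∈ range j, ((-1 : ℂ) - i)) * (z - c) ^ ((-1 : ℤ) - j)
  + (if j = 0 then a else 0)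

private lemma stmt3_hasDerivAt_sub_zpow (m : ℤ) (c z : ℂ) (hz : z ≠ c) :
    HasDerivAt (fun x => (x - c) ^ m) ((m : ℂ) * (z - c) ^ (m - 1)) z := by
  have h1 : HasDerivAt (fun x : ℂ => x - c) 1 z := (hasDerivAt_id z).sub_const c
  have h2 := (hasDerivAt_zpow m (z - c) (Or.inl (sub_ne_zero.2 hz))).comp z h1
  simpa [Function.comp_def] using h2

open Finset in
private lemma stmt3_hasDerivAt_F (k : ℕ) (b a c : ℂ) (j : ℕ) (z : ℂ) (hz : z ≠ c) :
    HasDerivAt (stmt3_F k b a c j) (stmt3_F k b a c (j+1) z) z := by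
  have h1 := (stmt3_hasDerivAt_sub_zpow ((k:ℤ) - j) c z hz).const_mul
    ((b / k.factorial) * (∏ i ∈ range j, ((k : ℂ) - i)))
  have h2 := (stmt3_hasDerivAt_sub_zpow ((-1:ℤ) - j) c z hz).const_mul
    (((-1:ℂ) ^ (k+1) / k.factorial) * (∏ i ∈ range j, ((-1 : ℂ) - i)))
  have h := (h1.add h2).add_const (if j = 0 then a else 0)
  refine h.congr_deriv ?_
  unfold stmt3_F
  rw [Finset.prod_range_succ, Finset.prod_range_succ]
  have e1 : (k:ℤ) - (j+1 : ℕ) = (k:ℤ) - j - 1 := by push_cast; ring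
  have e2 : (-1:ℤ) - (j+1 : ℕ) = (-1:ℤ) - j - 1 := by push_cast; ring
  rw [e1, e2]
  simp only [if_neg (Nat.succ_ne_zero j)]
  push_cast
  ring

private lemma stmt3_iter_eq (k : ℕ) (b a c : ℂ) (f : ℂ → ℂ)
    (hf : ∀ z : ℂ, z ≠ c → f z = stmt3_F k b a c 0 z) :
    ∀ j, ∀ z : ℂ, z ≠ c → iteratedDeriv j f z = stmt3_F k b a c j z := by
  intro j
  induction j with
  | zero => simpa [iteratedDeriv_zero] using hf
  | succ m ih =>
    intro z hz
    rw [iteratedDeriv_succ]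
    have hmem : {c}ᶜ ∈ nhds z := isOpen_compl_singleton.mem_nhds hz
    have hev : iteratedDeriv m f =ᶠ[nhds z] stmt3_F k b a c m := by
      filter_upwards [hmem] with x hx using ih x hx
    rw [hev.deriv_eq, (stmt3_hasDerivAt_F k b a c m z hz).deriv]

/-- Example 2 of the paper: with `a = ((-1)^{k+1}+1)·b`, the functions
`f_n(z) = b(z-1/n)^k/k! + (-1)^{k+1}/(k!(z-1/n)) + a` satisfy
`f_n^{(k)}(z) = b - 1/(z-1/n)^{k+1}` off the pole, `f_n` and `f_n^{(k)}` share the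
value `a` there, and `f_n^{(k)}` never takes the value `b` off the pole. -/
theorem stmt_3 (k : ℕ) (hk : 1 ≤ k) (b : ℂ) (hb : b ≠ 0) (n : ℕ) (hn : 1 ≤ n)
    (a : ℂ) (ha : a = ((-1 : ℂ) ^ (k + 1) + 1) * b) (f : ℂ → ℂ)
    (hf : ∀ z : ℂ, f z =
      b * (z - 1 / (n : ℂ)) ^ k / (Nat.factorial k) +
        (-1 : ℂ) ^ (k + 1) / ((Nat.factorial k) * (z - 1 / (n : ℂ))) + a) :
    (∀ z : ℂ, z ≠ 1 / (n : ℂ) →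
        iteratedDeriv k f z = b - 1 / (z - 1 / (n : ℂ)) ^ (k + 1)) ∧
    (∀ z : ℂ, z ≠ 1 / (n : ℂ) → (f z = a ↔ iteratedDeriv k f z = a)) ∧
    (∀ z : ℂ, z ≠ 1 / (n : ℂ) → iteratedDeriv k f z ≠ b) := by
  obtain ⟨c, hc⟩ : ∃ c : ℂ, 1 / (n : ℂ) = c := ⟨_, rfl⟩
  rw [hc] at hf ⊢
  have hfact : (k.factorial : ℂ) ≠ 0 := Nat.cast_ne_zero.2 k.factorial_ne_zero
  have hsq : ((-1:ℂ))^k * (-1:ℂ)^k = 1 := by rw [← mul_pow]; norm_num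
  have hf0 : ∀ z : ℂ, z ≠ c → f z = stmt3_F k b a c 0 z := by
    intro z hz
    have hw : z - c ≠ 0 := sub_ne_zero.2 hz
    rw [hf z]
    unfold stmt3_F
    simp only [Finset.prod_range_zero, Nat.cast_zero, sub_zero, if_pos rfl, mul_one]
    rw [zpow_natCast, zpow_neg_one]
    field_simp
    rw [if_pos trivial]
  have hder : ∀ z : ℂ, z ≠ c → iteratedDeriv k f z = b - 1 / (z - c) ^ (k + 1) := by
    intro z hz
    have hw : z - c ≠ 0 := sub_ne_zero.2 hz
    rw [stmt3_iter_eq k b a c f hf0 k z hz]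
    unfold stmt3_F
    rw [stmt3_prodA, stmt3_prodB]
    have e1 : (k:ℤ) - k = 0 := by ring
    have e2 : (-1:ℤ) - k = -((k+1 : ℕ) : ℤ) := by push_cast; ring
    rw [e1, e2, zpow_zero, zpow_neg, zpow_natCast]
    rw [if_neg (by omega : ¬ k = 0)]
    rw [div_mul_cancel₀ _ hfact, inv_eq_one_div]
    have h3 : ((-1:ℂ))^(k+1) / k.factorial * ((-1:ℂ)^k * k.factorial) = -1 := by
      rw [pow_succ, div_mul_eq_mul_div, mul_comm]
      field_simp
      linear_combination (-1 : ℂ) * hsq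
    rw [mul_one]
    linear_combination (1 / (z-c)^(k+1)) * h3
  refine ⟨hder, ?_, ?_⟩
  · intro z hz
    have hw : z - c ≠ 0 := sub_ne_zero.2 hz
    have hwp : (z - c) ^ (k+1) ≠ 0 := pow_ne_zero _ hw
    rw [hf z, hder z hz, ha]
    have key : ∀ _ : Unit, True := fun _ => trivial
    constructor
    · intro h
      have h0 : b * (z-c) ^ k / (k.factorial) + (-1:ℂ) ^ (k+1) / (k.factorial * (z-c)) = 0 := by
        linear_combination h
      have h' : b * (z-c) ^ (k+1) = (-1:ℂ)^k := by
        field_simp at h0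
        rw [pow_succ]
        have h1 : b * (z-c) ^ k * (z-c) + (-1:ℂ)^k * (-1) = 0 := by
          apply mul_right_cancel₀ hfact
          linear_combination (k.factorial : ℂ) * h0
        linear_combination h1
      field_simp
      simp only [pow_succ] at h' ⊢
      linear_combination ((-1:ℂ)^k) * h' + hsq
    · intro h
      have h' : b * (z-c) ^ (k+1) = (-1:ℂ)^k := by
        field_simp at h
        simp only [pow_succ] at h ⊢
        linear_combination ((-1:ℂ)^k) * h - (b * ((z-c)^k * (z-c))) * hsq
      have h0 : b * (z-c) ^ k / (k.factorial) + (-1:ℂ) ^ (k+1) / (k.factorial * (z-c)) = 0 := by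
        field_simp
        simp only [pow_succ] at h'
        linear_combination h'
      linear_combination h0
  · intro z hz
    have hw : z - c ≠ 0 := sub_ne_zero.2 hz
    have hwp : (z - c) ^ (k+1) ≠ 0 := pow_ne_zero _ hw
    rw [hder z hz]
    intro h
    have h1 : (1 : ℂ) / (z - c) ^ (k+1) = 0 := by linear_combination -h
    exact (one_div_ne_zero hwp) h1
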